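/- Let L(f,0) be an nℤ-periodic algebra with structure matrix (α_{ij}) and let s ∈ {1,…,n−1} with gcd(s,n) = 1. If (α_{is}, α_{si}) ≠ (0,0) for all i = 0,…,n−1, then the subalgebra generated by {e_{nk+s} : k ∈ ℤ} is all of L(f,0). -/

import Mathlib

open Finsupp

/-- Multiplication of an `nℤ`-periodic algebra with structure matrix `α`. -/
noncomputable def mulN {K : Type*} [Field K] (n : ℕ) (α : ZMod n → ZMod n → K)
    (x y : ℤ →₀ K) : ℤ →₀ K :=
  x.sum fun a xa => y.sum fun b yb =>
    Finsupp.single (a + b) (xa * yb * α (a : ZMod n) (b : ZMod n))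

lemma mulN_single {K : Type*} [Field K] (n : ℕ) (α : ZMod n → ZMod n → K)
    (a b : ℤ) (c d : K) :
    mulN n α (Finsupp.single a c) (Finsupp.single b d)
      = Finsupp.single (a + b) (c * d * α (a : ZMod n) (b : ZMod n)) := by
  unfold mulN
  rw [Finsupp.sum_single_index, Finsupp.sum_single_index] <;> simp

/-- if `s ≢ 0 (mod n)`, `gcd(s,n) = 1` and `(α_{is}, α_{si}) ≠ (0,0)` for
all `i`, then the subalgebra generated by `{e_{nk+s} : k ∈ ℤ}` is all of `L(f,0)`,
i.e. every subspace containing these elements and closed under multiplication is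
everything. -/
theorem stmt17 {K : Type*} [Field K] (n : ℕ) (hn : 0 < n) (α : ZMod n → ZMod n → K)
    (s : ℤ) (hs0 : ¬ ((n : ℤ) ∣ s)) (hcop : IsCoprime s (n : ℤ))
    (hb : ∀ i : ZMod n, ¬ (α i (s : ZMod n) = 0 ∧ α (s : ZMod n) i = 0)) :
    ∀ p : Submodule K (ℤ →₀ K),
      (∀ k : ℤ, Finsupp.single ((n : ℤ) * k + s) (1 : K) ∈ p) →
      (∀ x y : ℤ →₀ K, x ∈ p → y ∈ p → mulN n α x y ∈ p) →
      p = ⊤ := by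
  intro p h1 h2
  have hs : Finsupp.single s (1 : K) ∈ p := by
    have := h1 0; simpa using this
  -- key induction: all m ≡ j*s (mod n), j ≥ 1
  have key : ∀ j : ℤ, 1 ≤ j → ∀ m : ℤ, (n : ℤ) ∣ (m - j * s) →
      Finsupp.single m (1 : K) ∈ p := by
    intro j
    refine Int.le_induction (motive := fun j _ => ∀ m : ℤ, (n : ℤ) ∣ m - j * s → Finsupp.single m (1 : K) ∈ p) ?_ ?_ j
    · intro m hm
      obtain ⟨k, hk⟩ := hm
      have : m = (n : ℤ) * k + s := by linarith
      rw [this]; exact h1 k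
    · intro j hj ih m hm
      have hms : (n : ℤ) ∣ ((m - s) - j * s) := by
        obtain ⟨k, hk⟩ := hm
        exact ⟨k, by linarith⟩
      have ha : Finsupp.single (m - s) (1 : K) ∈ p := ih (m - s) hms
      set i : ZMod n := ((m - s : ℤ) : ZMod n) with hi
      rcases not_and_or.mp (hb i) with hne | hne
      · have hmul := h2 _ _ ha hs
        rw [mulN_single] at hmul
        have : Finsupp.single m (1 : K)
            = (α i (s : ZMod n))⁻¹ • Finsupp.single (m - s + s) (1 * 1 * α i (s : ZMod n)) := by
          rw [Finsupp.smul_single]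
          congr 1
          · ring
          · rw [smul_eq_mul, one_mul, one_mul, inv_mul_cancel₀ hne]
        rw [this]
        exact p.smul_mem _ hmul
      · have hmul := h2 _ _ hs ha
        rw [mulN_single] at hmul
        have : Finsupp.single m (1 : K)
            = (α (s : ZMod n) i)⁻¹ • Finsupp.single (s + (m - s)) (1 * 1 * α (s : ZMod n) i) := by
          rw [Finsupp.smul_single]
          congr 1
          · ring
          · rw [smul_eq_mul, one_mul, one_mul, inv_mul_cancel₀ hne]
        rw [this]
        exact p.smul_mem _ hmul
  -- every single is in p
  have hall : ∀ m : ℤ, Finsupp.single m (1 : K) ∈ p := by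
    intro m
    obtain ⟨u, v, huv⟩ := hcop
    set t : ℤ := m * u with ht
    have hts : (n : ℤ) ∣ (m - t * s) := by
      exact ⟨m * v, by rw [ht]; linear_combination (-m) * huv⟩
    set j : ℤ := t % (n : ℤ) + n with hjdef
    have hn' : (0 : ℤ) < n := by exact_mod_cast hn
    have hj1 : 1 ≤ j := by
      have := Int.emod_nonneg t (ne_of_gt hn')
      omega
    have hjt : (n : ℤ) ∣ (t - j) := by
      have : t - j = (n : ℤ) * (t / n) - n := by
        have := Int.emod_add_mul_ediv t (n : ℤ)
        omega
      exact ⟨t / n - 1, by linarith [this]⟩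
    refine key j hj1 m ?_
    have : m - j * s = (m - t * s) + (t - j) * s := by ring
    rw [this]
    exact dvd_add hts (Dvd.dvd.mul_right hjt s)
  rw [eq_top_iff]
  rintro x -
  induction x using Finsupp.induction with
  | zero => exact p.zero_mem
  | single_add a b f _ _ ih =>
    refine p.add_mem ?_ ih
    have : Finsupp.single a b = b • Finsupp.single a (1 : K) := by
      rw [Finsupp.smul_single, smul_eq_mul, mul_one]
    rw [this]
    exact p.smul_mem _ (hall a)
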